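/- Assume σ ≠ 0. The joint probability that the partition has exactly j blocks and the τ_i-th blocks (in uniformly random order) have the prescribed sizes satisfies P[K_n = j and N_{τ_i} = n_{τ_i} for all i = 1,…,p] = V_{n,j} · ((j−p)!/j!) · (n! / (n_{τ_1}!⋯n_{τ_p}!·(n − Σ_{i=1}^{p} n_{τ_i})!)) · ∏_{i=1}^{p} (1−σ)_{(n_{τ_i}−1)↑} · C(n − Σ_{i=1}^{p} n_{τ_i}, j−p; σ)/σ^{j−p}. -/

import Mathlib

open Finset

attribute [local instance] Classical.propDecidable

noncomputable section

/-- Rising factorial `x(x+1)⋯(x+N−1)`. -/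
def risingFac (x : ℝ) (N : ℕ) : ℝ := ∏ i ∈ Finset.range N, (x + i)

/-- Falling factorial `x(x−1)⋯(x−N+1)`. -/
def fallingFac (x : ℝ) (N : ℕ) : ℝ := ∏ i ∈ Finset.range N, (x - i)

/-- Noncentral generalized factorial coefficient `C(N,k;σ,γ)`. -/
def gfc (N k : ℕ) (σ γ : ℝ) : ℝ :=
  (1 / (Nat.factorial k : ℝ)) *
    ∑ i ∈ Finset.range (k + 1),
      (-1 : ℝ) ^ i * (Nat.choose k i : ℝ) * risingFac (-(i : ℝ) * σ - γ) N

/-- Central generalized factorial coefficient `C(N,k;σ)`. -/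
def cgfc (N k : ℕ) (σ : ℝ) : ℝ := gfc N k σ 0

/-- Binomial coefficient over `ℤ`, zero unless `0 ≤ b ≤ a`. -/
def ibinom (a b : ℤ) : ℝ :=
  if 0 ≤ b ∧ b ≤ a then (Nat.choose a.toNat b.toNat : ℝ) else 0

/-- Multinomial coefficient `m!/((l!)^r (m−rl)!)`, zero if `rl > m`. -/
def multinom (m l r : ℕ) : ℝ :=
  if r * l ≤ m then
    (Nat.factorial m : ℝ) / ((Nat.factorial l : ℝ) ^ r * (Nat.factorial (m - r * l) : ℝ))
  else 0

/-- `P` is a set partition of the finset `s`. -/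
def IsPartOn {α : Type*} (s : Finset α) (P : Finset (Finset α)) : Prop :=
  (∀ B ∈ P, B ⊆ s) ∧ ∅ ∉ P ∧ ∀ a ∈ s, ∃! B, B ∈ P ∧ a ∈ B

/-- Restriction of a partition to `s`. -/
def restrictPart {α : Type*} [DecidableEq α] (P : Finset (Finset α)) (s : Finset α) :
    Finset (Finset α) := (P.image fun C => C ∩ s).erase ∅

/-- Gibbs probability of a partition with block sizes `|C|` and `VN k` the Gibbs weight. -/
def gibbsW {α : Type*} (σ : ℝ) (VN : ℕ → ℝ) (P : Finset (Finset α)) : ℝ :=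
  VN P.card * ∏ C ∈ P, risingFac (1 - σ) (C.card - 1)

/-- Ewens–Pitman weight system. -/
def EPV (σ θ : ℝ) : ℕ → ℕ → ℝ :=
  fun N k => (∏ i ∈ Finset.range k, (θ + (i : ℝ) * σ)) / risingFac θ N

/-- The "old" elements `{1,…,n}` inside `{1,…,n+m}`. -/
def oldSet (n m : ℕ) : Finset (Fin (n + m)) :=
  Finset.univ.filter fun x => (x : ℕ) < n

/-- Number of new elements in the block of `ρ` containing the old block `Bi`. -/
def Scount (n m : ℕ) (Bi : Finset (Fin (n + m))) (ρ : Finset (Finset (Fin (n + m)))) : ℕ :=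
  ∑ C ∈ ρ.filter (fun C => Bi ⊆ C), (C \ oldSet n m).card

/-- Partitions of `{1,…,n+m}` extending the partition `πP` of the old elements. -/
def extensions (n m : ℕ) (πP : Finset (Finset (Fin (n + m)))) :
    Finset (Finset (Finset (Fin (n + m)))) :=
  Finset.univ.filter fun ρ => IsPartOn Finset.univ ρ ∧ restrictPart ρ (oldSet n m) = πP

/-- Conditional expectation given complete information (the initial partition `πP`). -/
def condExpPi (σ : ℝ) (V : ℕ → ℕ → ℝ) (n m : ℕ) (πP : Finset (Finset (Fin (n + m))))
    (f : Finset (Finset (Fin (n + m))) → ℝ) : ℝ :=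
  (∑ ρ ∈ extensions n m πP, f ρ * gibbsW σ (V (n + m)) ρ) /
    (∑ ρ ∈ extensions n m πP, gibbsW σ (V (n + m)) ρ)

/-- Partitions of `{1,…,n+m}` whose restriction to the old elements has exactly `j` blocks. -/
def withJ (n m j : ℕ) : Finset (Finset (Finset (Fin (n + m)))) :=
  Finset.univ.filter fun ρ =>
    IsPartOn Finset.univ ρ ∧ (restrictPart ρ (oldSet n m)).card = j

/-- Partitions of `s` with exactly `j` blocks. -/
def partsJOf {α : Type*} [Fintype α] (s : Finset α) (j : ℕ) :
    Finset (Finset (Finset α)) :=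
  Finset.univ.filter fun π' => IsPartOn s π' ∧ π'.card = j

/-- Conditional expectation given the incomplete information `K_n = j`. -/
def condExpK (σ : ℝ) (V : ℕ → ℕ → ℝ) (n m j : ℕ)
    (f : Finset (Finset (Fin (n + m))) → ℝ) : ℝ :=
  (∑ ρ ∈ withJ n m j, f ρ * gibbsW σ (V (n + m)) ρ) /
    (∑ π' ∈ partsJOf (oldSet n m) j, gibbsW σ (V n) π')

/-- Number of old blocks (indexed by `B`) re-observed in the additional sample. -/
def RcntB (n m j : ℕ) (B : Fin j → Finset (Fin (n + m)))
    (ρ : Finset (Finset (Fin (n + m)))) : ℕ :=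
  (Finset.univ.filter fun i : Fin j => Scount n m (B i) ρ ≠ 0).card

/-- Number of old blocks (indexed by `B`) re-observed with frequency `l`. -/
def RlcntB (n m j l : ℕ) (B : Fin j → Finset (Fin (n + m)))
    (ρ : Finset (Finset (Fin (n + m)))) : ℕ :=
  (Finset.univ.filter fun i : Fin j => Scount n m (B i) ρ = l).card

/-- Number of blocks of the restriction whose containing block has a new element. -/
def Rcnt (n m : ℕ) (ρ : Finset (Finset (Fin (n + m)))) : ℕ :=
  ((restrictPart ρ (oldSet n m)).filter fun Bi =>
    ∃ C ∈ ρ, Bi ⊆ C ∧ (C \ oldSet n m) ≠ ∅).card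

/-- Number of blocks of the restriction whose containing block has exactly `l` new elements. -/
def Rlcnt (n m l : ℕ) (ρ : Finset (Finset (Fin (n + m)))) : ℕ :=
  ((restrictPart ρ (oldSet n m)).filter fun Bi =>
    ∃ C ∈ ρ, Bi ⊆ C ∧ (C \ oldSet n m).card = l).card

/-- Number of bijections from `Fin j` onto the blocks of `π'` satisfying `Q`. -/
def bijCount {α : Type*} [Fintype α] (j : ℕ) (π' : Finset (Finset α))
    (Q : (Fin j → Finset α) → Prop) : ℕ :=
  ((Finset.univ : Finset (Fin j → Finset α)).filter fun β =>
    Function.Injective β ∧ Finset.image β Finset.univ = π' ∧ Q β).card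

/-- Conditional expectation given almost-complete information. -/
def condExpTau (σ : ℝ) (V : ℕ → ℕ → ℝ) (n m j p : ℕ) (τ : Fin p → Fin j) (nτ : Fin p → ℕ)
    (f : Finset (Finset (Fin (n + m))) → ℝ) : ℝ :=
  (∑ ρ ∈ withJ n m j,
      (bijCount j (restrictPart ρ (oldSet n m)) (fun β => ∀ i, (β (τ i)).card = nτ i) : ℝ) *
        f ρ * gibbsW σ (V (n + m)) ρ) /
    (∑ π' ∈ partsJOf (oldSet n m) j,
      (bijCount j π' (fun β => ∀ i, (β (τ i)).card = nτ i) : ℝ) * gibbsW σ (V n) π')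

/-! ### Auxiliary development -/


section AuxJBSD

open Function

lemma risingFac_zero' (x : ℝ) : risingFac x 0 = 1 := by simp [risingFac]

lemma risingFac_succ' (x : ℝ) (N : ℕ) : risingFac x (N + 1) = risingFac x N * (x + N) := by
  simp [risingFac, Finset.prod_range_succ]

lemma risingFac_neg_eq (σ : ℝ) (m : ℕ) :
    risingFac (-σ) (m + 1) = -σ * risingFac (1 - σ) m := by
  rw [risingFac, risingFac, Finset.prod_range_succ']
  rw [mul_comm]
  congr 1
  · norm_num
  · exact Finset.prod_congr rfl fun i _ => by push_cast; ring

/-- Fiber cardinality of a function. -/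
def fibc {γ κ : Type} [Fintype γ] (f : γ → κ) (c : κ) : ℕ :=
  (Finset.univ.filter fun x => f x = c).card

lemma sum_fibc {γ κ : Type} [Fintype γ] [Fintype κ] (f : γ → κ) :
    ∑ c, fibc f c = Fintype.card γ := by
  classical
  rw [← Finset.card_univ]
  exact (Finset.card_eq_sum_card_fiberwise (fun x _ => Finset.mem_univ (f x))).symm

lemma fibc_comp_equiv {γ γ' κ κ' : Type} [Fintype γ] [Fintype γ']
    (e₁ : γ' ≃ γ) (e₂ : κ ≃ κ') (f : γ → κ) (c : κ) :
    fibc (fun x => e₂ (f (e₁ x))) (e₂ c) = fibc f c := by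
  classical
  unfold fibc
  refine Finset.card_bij' (fun x _ => e₁ x) (fun x _ => e₁.symm x) ?_ ?_ ?_ ?_ <;>
    intro x hx <;> simp only [Finset.mem_filter, Finset.mem_univ, true_and] at hx ⊢ <;>
    simp [e₂.injective.eq_iff] at hx ⊢ <;> simp [hx]

/-- Sum over surjections of a product of a weight over fiber sizes. -/
def ssum (u : ℕ → ℝ) (γ κ : Type) [Fintype γ] [Fintype κ] : ℝ :=
  ∑ f ∈ Finset.univ.filter (fun f : γ → κ => Function.Surjective f), ∏ c, u (fibc f c)

lemma ssum_congr (u : ℕ → ℝ) {γ γ' κ κ' : Type} [Fintype γ] [Fintype γ'] [Fintype κ] [Fintype κ']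
    (e₁ : γ ≃ γ') (e₂ : κ ≃ κ') : ssum u γ κ = ssum u γ' κ' := by
  classical
  unfold ssum
  refine Finset.sum_bij' (fun f _ => fun x' => e₂ (f (e₁.symm x')))
    (fun g _ => fun x => e₂.symm (g (e₁ x))) ?_ ?_ ?_ ?_ ?_
  · intro f hf
    simp only [Finset.mem_filter, Finset.mem_univ, true_and] at hf ⊢
    exact e₂.surjective.comp (hf.comp e₁.symm.surjective)
  · intro g hg
    simp only [Finset.mem_filter, Finset.mem_univ, true_and] at hg ⊢
    exact e₂.symm.surjective.comp (hg.comp e₁.surjective)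
  · intro f _; funext x; simp
  · intro g _; funext x; simp
  · intro f _
    refine Fintype.prod_equiv e₂ _ _ fun c => ?_
    rw [fibc_comp_equiv e₁.symm e₂ f c]

lemma sum_surj_eq_ssum (u : ℕ → ℝ) {γ κ : Type} [Fintype γ] [Fintype κ]
    (S : Finset (γ → κ)) (hS : ∀ f, f ∈ S ↔ Function.Surjective f) :
    (∑ f ∈ S, ∏ c, u (fibc f c)) = ssum u γ κ := by
  rw [ssum]
  refine Finset.sum_congr ?_ fun _ _ => rfl
  ext f
  rw [Finset.mem_filter, hS f]
  simp

end AuxJBSD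

section AuxJBSD2

open Function

lemma fibc_eq_sum {γ κ : Type} [Fintype γ] (g : γ → κ) (c : κ) :
    fibc g c = ∑ x : γ, if g x = c then 1 else 0 := by
  rw [fibc, Finset.card_filter]

lemma fibc_congr {γ κ κ' : Type} [Fintype γ] (f : γ → κ) (f' : γ → κ') (c : κ) (c' : κ')
    (h : ∀ x, f x = c ↔ f' x = c') : fibc f c = fibc f' c' := by
  rw [fibc_eq_sum, fibc_eq_sum]
  refine Finset.sum_congr rfl fun x _ => ?_
  by_cases hx : f x = c
  · rw [if_pos hx, if_pos ((h x).1 hx)]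
  · rw [if_neg hx, if_neg (fun hx' => hx ((h x).2 hx'))]

lemma fibc_pos {γ κ : Type} [Fintype γ] {f : γ → κ} {c : κ} {x : γ} (hx : f x = c) :
    0 < fibc f c := by
  rw [fibc]
  refine Finset.card_pos.2 ⟨x, ?_⟩
  simp only [Finset.mem_filter, Finset.mem_univ, true_and]
  exact hx

lemma fibc_cons {N : ℕ} {κ : Type} (c₀ : κ) (f : Fin N → κ) (c : κ) :
    fibc (Fin.cons c₀ f : Fin (N + 1) → κ) c = (if c₀ = c then 1 else 0) + fibc f c := by
  rw [fibc_eq_sum, fibc_eq_sum, Fin.sum_univ_succ]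
  simp only [Fin.cons_zero, Fin.cons_succ]

lemma allsum_fin (σ : ℝ) (k : ℕ) : ∀ N : ℕ,
    (∑ f : Fin N → Fin k, ∏ c, risingFac (-σ) (fibc f c))
      = risingFac (-(k : ℝ) * σ) N := by
  intro N
  induction N with
  | zero =>
      have h1 : ∀ f : Fin 0 → Fin k, (∏ c, risingFac (-σ) (fibc f c)) = 1 := by
        intro f
        have h0 : ∀ c, fibc f c = 0 := fun c => by simp [fibc]
        simp [h0, risingFac_zero']
      rw [Finset.sum_congr rfl fun f _ => h1 f, Finset.sum_const, risingFac_zero']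
      simp [Finset.card_univ]
  | succ N ih =>
      have key : ∀ (c₀ : Fin k) (f : Fin N → Fin k),
          (∏ c, risingFac (-σ) (fibc (Fin.cons c₀ f : Fin (N + 1) → Fin k) c))
            = (-σ + (fibc f c₀ : ℝ)) * ∏ c, risingFac (-σ) (fibc f c) := by
        intro c₀ f
        rw [← Finset.mul_prod_erase Finset.univ _ (Finset.mem_univ c₀),
          ← Finset.mul_prod_erase Finset.univ (fun c => risingFac (-σ) (fibc f c))
            (Finset.mem_univ c₀)]
        have h2 : ∀ c ∈ Finset.univ.erase c₀,
            risingFac (-σ) (fibc (Fin.cons c₀ f : Fin (N + 1) → Fin k) c)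
              = risingFac (-σ) (fibc f c) := by
          intro c hc
          rw [fibc_cons, if_neg (Ne.symm (Finset.mem_erase.1 hc).1), zero_add]
        rw [Finset.prod_congr rfl h2, fibc_cons, if_pos rfl, add_comm 1 (fibc f c₀),
          risingFac_succ']
        push_cast
        ring
      have hequiv : (∑ f : Fin (N + 1) → Fin k, ∏ c, risingFac (-σ) (fibc f c))
          = ∑ q : Fin k × (Fin N → Fin k),
              ∏ c, risingFac (-σ) (fibc (Fin.cons q.1 q.2 : Fin (N + 1) → Fin k) c) := by
        refine (Fintype.sum_equiv (Fin.consEquiv (fun _ : Fin (N + 1) => Fin k)) _ _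
          fun q => ?_).symm
        rfl
      rw [hequiv, Fintype.sum_prod_type]
      rw [Finset.sum_congr rfl fun c₀ _ => Finset.sum_congr rfl fun f _ => key c₀ f,
        Finset.sum_comm]
      have hscal : ∀ f : Fin N → Fin k,
          (∑ c₀ : Fin k, (-σ + (fibc f c₀ : ℝ)) * ∏ c, risingFac (-σ) (fibc f c))
            = (-(k : ℝ) * σ + N) * ∏ c, risingFac (-σ) (fibc f c) := by
        intro f
        rw [← Finset.sum_mul]
        congr 1
        rw [Finset.sum_add_distrib, Finset.sum_const, ← Nat.cast_sum, sum_fibc]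
        simp only [Finset.card_univ, Fintype.card_fin, nsmul_eq_mul]
        push_cast
        ring
      rw [Finset.sum_congr rfl fun f _ => hscal f, ← Finset.mul_sum, ih, risingFac_succ',
        mul_comm]

set_option maxHeartbeats 1000000 in
lemma image_fiber_sum (u : ℕ → ℝ) (hu0 : u 0 = 1) {N k : ℕ} (T : Finset (Fin k))
    (S : Finset (Fin N → Fin k)) (hS : ∀ f, f ∈ S ↔ Finset.image f Finset.univ = T) :
    (∑ f ∈ S, ∏ c, u (fibc f c)) = ssum u (Fin N) ↥T := by
  classical
  rw [← sum_surj_eq_ssum u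
      (Finset.univ.filter (fun g : Fin N → ↥T => Function.Surjective g))
      (fun g => by simp)]
  refine (Finset.sum_bij (fun (g : Fin N → ↥T) _ => fun x => (g x : Fin k))
    ?_ ?_ ?_ ?_).symm
  · intro g hg
    have hsurj : Function.Surjective g := (Finset.mem_filter.1 hg).2
    rw [hS]
    ext c
    simp only [Finset.mem_image, Finset.mem_univ, true_and]
    constructor
    · rintro ⟨x, rfl⟩; exact (g x).2
    · intro hc
      obtain ⟨x, hx⟩ := hsurj ⟨c, hc⟩
      exact ⟨x, by rw [hx]⟩
  · intro g₁ h₁ g₂ h₂ heq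
    funext x
    exact Subtype.ext (congrFun heq x)
  · intro f hf
    have h : Finset.image f Finset.univ = T := (hS f).1 hf
    have hmem : ∀ x, f x ∈ T := fun x =>
      h ▸ Finset.mem_image_of_mem f (Finset.mem_univ x)
    refine ⟨fun x => ⟨f x, hmem x⟩, ?_, rfl⟩
    simp only [Finset.mem_filter, Finset.mem_univ, true_and]
    rintro ⟨c, hc⟩
    rw [← h] at hc
    obtain ⟨x, _, hx⟩ := Finset.mem_image.1 hc
    exact ⟨x, Subtype.ext hx⟩
  · intro g _
    have hfib0 : ∀ c ∈ Finset.univ, c ∉ T → u (fibc (fun x => (g x : Fin k)) c) = 1 := by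
      intro c _ hc
      have h0 : fibc (fun x => (g x : Fin k)) c = 0 := by
        rw [fibc_eq_sum]
        refine Finset.sum_eq_zero fun x _ => ?_
        rw [if_neg]
        intro hfx
        exact hc (hfx ▸ (g x).2)
      rw [h0, hu0]
    rw [← Finset.prod_subset (Finset.subset_univ T) hfib0]
    rw [← Finset.prod_coe_sort T (fun c => u (fibc (fun x => (g x : Fin k)) c))]
    refine Finset.prod_congr rfl fun c _ => ?_
    congr 1
    exact fibc_congr _ _ _ _ (fun x => Subtype.ext_iff)

lemma ssum_coe_card (u : ℕ → ℝ) (N : ℕ) {k : ℕ} (T : Finset (Fin k)) :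
    ssum u (Fin N) ↥T = ssum u (Fin N) (Fin T.card) := by
  rw [ssum_congr u (Equiv.refl (Fin N)) (Fintype.equivFin ↥T), Fintype.card_coe]

lemma allsum_eq (u : ℕ → ℝ) (hu0 : u 0 = 1) (N k : ℕ) :
    (∑ f : Fin N → Fin k, ∏ c, u (fibc f c))
      = ∑ t ∈ Finset.range (k + 1), (Nat.choose k t : ℝ) * ssum u (Fin N) (Fin t) := by
  classical
  rw [← Finset.sum_fiberwise_of_maps_to
      (g := fun f : Fin N → Fin k => Finset.image f Finset.univ)
      (t := (Finset.univ : Finset (Fin k)).powerset)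
      (fun f _ => Finset.mem_powerset.2 (Finset.subset_univ _))
      (fun f => ∏ c, u (fibc f c))]
  rw [Finset.sum_congr rfl (fun T _ => image_fiber_sum u hu0 T _
      (fun f => by rw [Finset.mem_filter]; simp))]
  rw [Finset.sum_congr rfl (fun T _ => ssum_coe_card u N T)]
  rw [Finset.sum_powerset]
  refine Finset.sum_congr (by rw [Finset.card_univ, Fintype.card_fin]) ?_
  intro t _
  rw [Finset.sum_congr rfl (fun T hT => by rw [(Finset.mem_powersetCard.1 hT).2]),
    Finset.sum_const, Finset.card_powersetCard, Finset.card_univ, Fintype.card_fin,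
    nsmul_eq_mul]

lemma alt_binom_delta (k t : ℕ) (ht : t ≤ k) :
    (∑ i ∈ Finset.range (k + 1),
        if t ≤ i then ((-1 : ℝ)) ^ (k - i) * (Nat.choose k i : ℝ) * (Nat.choose i t : ℝ) else 0)
      = if t = k then 1 else 0 := by
  rw [← Finset.sum_filter]
  have hfil : (Finset.range (k + 1)).filter (fun i => t ≤ i) = Finset.Ico t (k + 1) := by
    ext i; simp only [Finset.mem_filter, Finset.mem_range, Finset.mem_Ico]; omega
  rw [hfil, Finset.sum_Ico_eq_sum_range]
  have hk1 : k + 1 - t = (k - t) + 1 := by omega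
  rw [hk1]
  have hterm : ∀ d ∈ Finset.range ((k - t) + 1),
      ((-1 : ℝ)) ^ (k - (t + d)) * (Nat.choose k (t + d) : ℝ) * (Nat.choose (t + d) t : ℝ)
        = (Nat.choose k t : ℝ) * ((-1 : ℝ)) ^ (k - t) *
            (((-1 : ℝ)) ^ d * (Nat.choose (k - t) d : ℝ)) := by
    intro d hd
    have hd' : d ≤ k - t := by simpa [Nat.lt_succ_iff] using hd
    have h1 : (Nat.choose k (t + d)) * (Nat.choose (t + d) t)
        = Nat.choose k t * Nat.choose (k - t) d := by
      have h := Nat.choose_mul (n := k) (k := t + d) (s := t) (by omega)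
      simpa [Nat.add_sub_cancel_left] using h
    have h2 : ((-1 : ℝ)) ^ (k - t) * ((-1 : ℝ)) ^ d = ((-1 : ℝ)) ^ (k - (t + d)) := by
      rw [← pow_add]
      have h3 : (k - t) + d = (k - (t + d)) + 2 * d := by omega
      rw [h3, pow_add, pow_mul]
      norm_num
    have h1' : ((Nat.choose k (t + d)) : ℝ) * (Nat.choose (t + d) t : ℝ)
        = (Nat.choose k t : ℝ) * (Nat.choose (k - t) d : ℝ) := by exact_mod_cast congrArg Nat.cast h1
    rw [← h2]
    linear_combination ((-1 : ℝ)) ^ (k - t) * ((-1 : ℝ)) ^ d * h1'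
  rw [Finset.sum_congr rfl hterm, ← Finset.mul_sum]
  have halt : (∑ d ∈ Finset.range ((k - t) + 1), ((-1 : ℝ)) ^ d * (Nat.choose (k - t) d : ℝ))
      = if k - t = 0 then 1 else 0 := by
    have h := Int.alternating_sum_range_choose (n := k - t)
    have h2 := congrArg (fun z : ℤ => (z : ℝ)) h
    push_cast at h2
    simpa using h2
  rw [halt]
  by_cases h : t = k
  · subst h; simp
  · have h0 : ¬(k - t = 0) := by omega
    simp [h, h0]

lemma binom_inversion (A S : ℕ → ℝ)
    (h : ∀ k, A k = ∑ t ∈ Finset.range (k + 1), (Nat.choose k t : ℝ) * S t) (k : ℕ) :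
    S k = ∑ i ∈ Finset.range (k + 1), ((-1 : ℝ)) ^ (k - i) * (Nat.choose k i : ℝ) * A i := by
  have expand : (∑ i ∈ Finset.range (k + 1), ((-1 : ℝ)) ^ (k - i) * (Nat.choose k i : ℝ) * A i)
      = ∑ i ∈ Finset.range (k + 1), ∑ t ∈ Finset.range (k + 1),
          (if t ≤ i then
            ((-1 : ℝ)) ^ (k - i) * (Nat.choose k i : ℝ) * ((Nat.choose i t : ℝ) * S t)
          else 0) := by
    refine Finset.sum_congr rfl fun i hi => ?_
    have hik : i ≤ k := by simpa [Nat.lt_succ_iff] using hi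
    have hfil : (Finset.range (k + 1)).filter (fun t => t ≤ i) = Finset.range (i + 1) := by
      ext t; simp only [Finset.mem_filter, Finset.mem_range]; omega
    rw [← Finset.sum_filter, hfil, h i, Finset.mul_sum]
    try exact Finset.sum_congr rfl fun t _ => by ring
  rw [expand, Finset.sum_comm]
  have hinner : ∀ t ∈ Finset.range (k + 1),
      (∑ i ∈ Finset.range (k + 1),
        if t ≤ i then
          ((-1 : ℝ)) ^ (k - i) * (Nat.choose k i : ℝ) * ((Nat.choose i t : ℝ) * S t)
        else 0)
      = (if t = k then 1 else 0) * S t := by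
    intro t ht
    have htk : t ≤ k := by simpa [Nat.lt_succ_iff] using ht
    rw [← alt_binom_delta k t htk, Finset.sum_mul]
    refine Finset.sum_congr rfl fun i _ => ?_
    by_cases hti : t ≤ i <;> simp [hti] <;> try ring
  rw [Finset.sum_congr rfl hinner]
  have : ∀ t ∈ Finset.range (k + 1), (if t = k then 1 else 0) * S t
      = if t = k then S t else 0 := by
    intro t _
    by_cases h' : t = k <;> simp [h']
  rw [Finset.sum_congr rfl this, Finset.sum_ite_eq' (Finset.range (k + 1)) k S]
  simp

set_option maxHeartbeats 1000000 in
lemma ssum_wt_eq_cgfc (σ : ℝ) (hσ0 : σ ≠ 0) (N k : ℕ) :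
    ssum (fun m => risingFac (1 - σ) (m - 1)) (Fin N) (Fin k)
      = (Nat.factorial k : ℝ) * cgfc N k σ / σ ^ k := by
  classical
  have h1 : ssum (fun m => risingFac (-σ) m) (Fin N) (Fin k)
      = (-σ) ^ k * ssum (fun m => risingFac (1 - σ) (m - 1)) (Fin N) (Fin k) := by
    rw [ssum, ssum]
    rw [Finset.mul_sum]
    refine Finset.sum_congr rfl fun f hf => ?_
    simp only [Finset.mem_filter, Finset.mem_univ, true_and] at hf
    have hsurj : Function.Surjective f := hf
    have hfib : ∀ c, fibc f c - 1 + 1 = fibc f c := by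
      intro c
      obtain ⟨x, hx⟩ := hsurj c
      have hpos : 0 < fibc f c := fibc_pos hx
      omega
    calc (∏ c, risingFac (-σ) (fibc f c))
        = ∏ c : Fin k, (-σ * risingFac (1 - σ) (fibc f c - 1)) := by
          refine Finset.prod_congr rfl fun c _ => ?_
          conv_lhs => rw [← hfib c]
          rw [risingFac_neg_eq]
      _ = (-σ) ^ k * ∏ c, risingFac (1 - σ) (fibc f c - 1) := by
          rw [Finset.prod_mul_distrib, Finset.prod_const, Finset.card_univ, Fintype.card_fin]
  have hA : ∀ t : ℕ, risingFac (-(t : ℝ) * σ) N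
      = ∑ s ∈ Finset.range (t + 1), (Nat.choose t s : ℝ) *
          ssum (fun m => risingFac (-σ) m) (Fin N) (Fin s) := by
    intro t
    rw [← allsum_fin σ t N]
    exact allsum_eq (fun m => risingFac (-σ) m) (risingFac_zero' _) N t
  have hS := binom_inversion (fun t => risingFac (-(t : ℝ) * σ) N)
      (fun t => ssum (fun m => risingFac (-σ) m) (Fin N) (Fin t)) hA k
  have hmain : σ ^ k * ssum (fun m => risingFac (1 - σ) (m - 1)) (Fin N) (Fin k)
      = ∑ i ∈ Finset.range (k + 1),
          (-1 : ℝ) ^ i * (Nat.choose k i : ℝ) * risingFac (-(i : ℝ) * σ - 0) N := by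
    have hsk : σ ^ k * ssum (fun m => risingFac (1 - σ) (m - 1)) (Fin N) (Fin k)
        = (-1 : ℝ) ^ k * ssum (fun m => risingFac (-σ) m) (Fin N) (Fin k) := by
      rw [h1, ← mul_assoc]
      congr 1
      rw [← mul_pow]
      norm_num
    rw [hsk, hS, Finset.mul_sum]
    refine Finset.sum_congr rfl fun i hi => ?_
    have hik : i ≤ k := by simpa [Nat.lt_succ_iff] using hi
    have hsign : (-1 : ℝ) ^ k * (-1 : ℝ) ^ (k - i) = (-1 : ℝ) ^ i := by
      rw [← pow_add]
      have h3 : k + (k - i) = i + 2 * (k - i) := by omega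
      rw [h3, pow_add, pow_mul]
      norm_num
    have harg : -(i : ℝ) * σ - 0 = -(i : ℝ) * σ := by ring
    rw [harg, ← hsign]
    ring
  rw [cgfc, gfc, ← hmain]
  have hfac : (Nat.factorial k : ℝ) ≠ 0 := Nat.cast_ne_zero.2 (Nat.factorial_ne_zero k)
  have hσk : σ ^ k ≠ 0 := pow_ne_zero k hσ0
  field_simp
  try ring

end AuxJBSD2

section AuxJBSD3

open Function

lemma fibc_restrict {γ κ : Type} [Fintype γ] (f : γ → κ) (A : Finset γ) (c₀ : κ)
    (hA : ∀ x, x ∈ A ↔ f x = c₀) (c : κ) (hc : c ≠ c₀)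
    (F : {x : γ // x ∉ A} → {c' : κ // c' ≠ c₀}) (hF : ∀ x, (F x : κ) = f x.1) :
    fibc F ⟨c, hc⟩ = fibc f c := by
  rw [fibc, fibc]
  refine Finset.card_bij' (i := fun x _ => x.1)
    (j := fun x hx => ⟨x, fun hxA => hc (by
      simp only [Finset.mem_filter, Finset.mem_univ, true_and] at hx
      rw [← hx]
      exact (hA x).1 hxA)⟩) ?_ ?_ ?_ ?_
  · intro x hx
    simp only [Finset.mem_filter, Finset.mem_univ, true_and] at hx ⊢
    rw [← hF x, hx]
  · intro x hx
    simp only [Finset.mem_filter, Finset.mem_univ, true_and] at hx ⊢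
    refine Subtype.ext ?_
    rw [hF, hx]
  · intro x _
    rfl
  · intro x _
    rfl

set_option maxHeartbeats 1000000 in
lemma master_lemma (σ : ℝ) :
    ∀ (p : ℕ) (γ κ : Type) [Fintype γ] [Fintype κ]
      (τ : Fin p → κ), Function.Injective τ →
    ∀ (nτ : Fin p → ℕ), (∀ i, 1 ≤ nτ i) → ((∑ i, nτ i) ≤ Fintype.card γ) →
    ∀ (S : Finset (γ → κ)),
      (∀ f, f ∈ S ↔ (Function.Surjective f ∧ ∀ i, fibc f (τ i) = nτ i)) →
    (∑ f ∈ S, ∏ c, risingFac (1 - σ) (fibc f c - 1))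
      = (Nat.factorial (Fintype.card γ) : ℝ) /
          ((∏ i, (Nat.factorial (nτ i) : ℝ)) *
            (Nat.factorial (Fintype.card γ - ∑ i, nτ i) : ℝ))
        * (∏ i, risingFac (1 - σ) (nτ i - 1))
        * ssum (fun m => risingFac (1 - σ) (m - 1))
            (Fin (Fintype.card γ - ∑ i, nτ i)) (Fin (Fintype.card κ - p)) := by
  intro p
  induction p with
  | zero =>
      intro γ κ _ _ τ _ nτ _ _ S hS
      have hS' : ∀ f, f ∈ S ↔ Function.Surjective f := by
        intro f
        rw [hS f]
        exact ⟨fun h => h.1, fun h => ⟨h, fun i => i.elim0⟩⟩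
      have h0 : (∑ i : Fin 0, nτ i) = 0 := by simp
      have h1 : (∏ i : Fin 0, (Nat.factorial (nτ i) : ℝ)) = 1 := by simp
      have h2 : (∏ i : Fin 0, risingFac (1 - σ) (nτ i - 1)) = 1 := by simp
      have hfac : (Nat.factorial (Fintype.card γ) : ℝ) ≠ 0 :=
        Nat.cast_ne_zero.2 (Nat.factorial_ne_zero _)
      calc (∑ f ∈ S, ∏ c, risingFac (1 - σ) (fibc f c - 1))
          = ssum (fun m => risingFac (1 - σ) (m - 1)) γ κ :=
            sum_surj_eq_ssum (fun m => risingFac (1 - σ) (m - 1)) S hS'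
        _ = ssum (fun m => risingFac (1 - σ) (m - 1))
              (Fin (Fintype.card γ - ∑ i : Fin 0, nτ i)) (Fin (Fintype.card κ - 0)) :=
            ssum_congr _ ((Fintype.equivFin γ).trans (finCongr
                (show Fintype.card γ = Fintype.card γ - ∑ i : Fin 0, nτ i by
                  rw [h0, Nat.sub_zero])))
              ((Fintype.equivFin κ).trans (finCongr (Nat.sub_zero _).symm))
        _ = _ := by
            have h3 : Fintype.card γ - (∑ i : Fin 0, nτ i) = Fintype.card γ := by
              rw [h0, Nat.sub_zero]
            set X := ssum (fun m => risingFac (1 - σ) (m - 1))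
              (Fin (Fintype.card γ - ∑ i : Fin 0, nτ i)) (Fin (Fintype.card κ - 0)) with hX
            rw [h1, h2, h3]
            field_simp
  | succ p ih =>
      intro γ κ _ _ τ hτ nτ hnτ hsum S hS
      have hmaps : ∀ f ∈ S, (Finset.univ.filter fun x => f x = τ 0) ∈
          Finset.powersetCard (nτ 0) (Finset.univ : Finset γ) := by
        intro f hf
        rw [Finset.mem_powersetCard]
        refine ⟨Finset.subset_univ _, ?_⟩
        have h := ((hS f).1 hf).2 0
        rw [← h]
        rfl
      rw [← Finset.sum_fiberwise_of_maps_to hmaps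
        (fun f => ∏ c, risingFac (1 - σ) (fibc f c - 1))]
      -- the constant value of the inner sum
      have hτ'ne : ∀ i : Fin p, τ i.succ ≠ τ 0 := fun i h => Fin.succ_ne_zero i (hτ h)
      set τ' : Fin p → {c : κ // c ≠ τ 0} := fun i => ⟨τ i.succ, hτ'ne i⟩ with hτ'def
      have hτ' : Function.Injective τ' := by
        intro i₁ i₂ h
        have := hτ (congrArg Subtype.val h)
        exact Fin.succ_injective _ this
      have hsum_succ : (∑ i : Fin (p + 1), nτ i) = nτ 0 + ∑ i : Fin p, nτ i.succ :=
        Fin.sum_univ_succ _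
      have hκ' : Fintype.card {c : κ // c ≠ τ 0} = Fintype.card κ - 1 := by
        rw [Fintype.card_subtype]
        rw [Finset.filter_ne', Finset.card_erase_of_mem (Finset.mem_univ _), Finset.card_univ]
      have hinner : ∀ A ∈ Finset.powersetCard (nτ 0) (Finset.univ : Finset γ),
          (∑ f ∈ S.filter (fun f => (Finset.univ.filter fun x => f x = τ 0) = A),
            ∏ c, risingFac (1 - σ) (fibc f c - 1))
          = risingFac (1 - σ) (nτ 0 - 1) *
              ((Nat.factorial (Fintype.card γ - nτ 0) : ℝ) /
                ((∏ i : Fin p, (Nat.factorial (nτ i.succ) : ℝ)) *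
                  (Nat.factorial ((Fintype.card γ - nτ 0) - ∑ i : Fin p, nτ i.succ) : ℝ))
              * (∏ i : Fin p, risingFac (1 - σ) (nτ i.succ - 1))
              * ssum (fun m => risingFac (1 - σ) (m - 1))
                  (Fin (Fintype.card γ - ∑ i : Fin (p + 1), nτ i))
                  (Fin (Fintype.card κ - (p + 1)))) := by
        intro A hA
        rw [Finset.mem_powersetCard] at hA
        obtain ⟨-, hAcard⟩ := hA
        have hγ' : Fintype.card {x : γ // x ∉ A} = Fintype.card γ - nτ 0 := by
          rw [Fintype.card_subtype]
          rw [Finset.filter_not, Finset.filter_mem_eq_inter, Finset.univ_inter,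
            Finset.card_sdiff_of_subset (Finset.subset_univ A), Finset.card_univ, hAcard]
        have hsum' : (∑ i : Fin p, nτ i.succ) ≤ Fintype.card γ - nτ 0 := by
          rw [hsum_succ] at hsum
          omega
        set T : Finset (({x : γ // x ∉ A}) → {c : κ // c ≠ τ 0}) :=
          Finset.univ.filter (fun f' => Function.Surjective f' ∧
            ∀ i : Fin p, fibc f' (τ' i) = nτ i.succ) with hTdef
        have hT : ∀ f', f' ∈ T ↔ (Function.Surjective f' ∧
            ∀ i : Fin p, fibc f' (τ' i) = nτ i.succ) := by
          intro f'
          rw [hTdef, Finset.mem_filter]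
          simp only [Finset.mem_univ, true_and]
        have hbij : (∑ f ∈ S.filter (fun f => (Finset.univ.filter fun x => f x = τ 0) = A),
              ∏ c, risingFac (1 - σ) (fibc f c - 1))
            = ∑ f' ∈ T, risingFac (1 - σ) (nτ 0 - 1) *
                ∏ c', risingFac (1 - σ) (fibc f' c' - 1) := by
          refine Finset.sum_bij'
            (i := fun f hf => fun x : {x : γ // x ∉ A} =>
              (⟨f x.1, by
                have hfil : (Finset.univ.filter fun y => f y = τ 0) = A :=
                  (Finset.mem_filter.1 hf).2
                intro hfx
                exact x.2 ((Finset.ext_iff.1 hfil x.1).1 (by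
                  simp only [Finset.mem_filter, Finset.mem_univ, true_and]
                  exact hfx))⟩ : {c : κ // c ≠ τ 0}))
            (j := fun g _ => fun x : γ => if hx : x ∈ A then τ 0 else (g ⟨x, hx⟩ : κ))
            ?_ ?_ ?_ ?_ ?_
          · -- maps into T
            intro f hf
            have hfS := (Finset.mem_filter.1 hf).1
            have hfil : (Finset.univ.filter fun y => f y = τ 0) = A :=
              (Finset.mem_filter.1 hf).2
            have hAiff : ∀ x, x ∈ A ↔ f x = τ 0 := by
              intro x
              rw [← hfil]
              simp only [Finset.mem_filter, Finset.mem_univ, true_and]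
            obtain ⟨hsurjf, hfibf⟩ := (hS f).1 hfS
            rw [hT]
            constructor
            · rintro ⟨c, hc⟩
              obtain ⟨x, hx⟩ := hsurjf c
              have hxA : x ∉ A := fun hxA => hc (by rw [← hx]; exact (hAiff x).1 hxA)
              exact ⟨⟨x, hxA⟩, Subtype.ext hx⟩
            · intro i
              rw [fibc_restrict f A (τ 0) hAiff (τ i.succ) (hτ'ne i) _ (fun x => rfl)]
              exact hfibf i.succ
          · -- maps back into the fiber of A
            intro g hg
            obtain ⟨hsurjg, hfibg⟩ := (hT g).1 hg
            have hAfib : (Finset.univ.filter fun x =>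
                (if hx : x ∈ A then τ 0 else (g ⟨x, hx⟩ : κ)) = τ 0) = A := by
              ext x
              simp only [Finset.mem_filter, Finset.mem_univ, true_and]
              constructor
              · intro hx
                by_contra hxA
                rw [dif_neg hxA] at hx
                exact (g ⟨x, hxA⟩).2 hx
              · intro hxA
                rw [dif_pos hxA]
            have hAiff : ∀ x, x ∈ A ↔
                (if hx : x ∈ A then τ 0 else (g ⟨x, hx⟩ : κ)) = τ 0 := by
              intro x
              constructor
              · intro hxA
                rw [dif_pos hxA]
              · intro hx
                by_contra hxA
                rw [dif_neg hxA] at hx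
                exact (g ⟨x, hxA⟩).2 hx
            rw [Finset.mem_filter]
            refine ⟨(hS _).2 ⟨?_, ?_⟩, hAfib⟩
            · -- surjective
              intro c
              by_cases hc : c = τ 0
              · have hApos : A.Nonempty := by
                  rw [← Finset.card_pos, hAcard]
                  exact hnτ 0
                obtain ⟨x, hxA⟩ := hApos
                refine ⟨x, ?_⟩
                dsimp only
                rw [dif_pos hxA, hc]
              · obtain ⟨x, hx⟩ := hsurjg ⟨c, hc⟩
                refine ⟨x.1, ?_⟩
                dsimp only
                rw [dif_neg x.2]
                have h := congrArg Subtype.val hx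
                simpa using h
            · -- fiber sizes
              intro i
              refine Fin.cases ?_ ?_ i
              · show (Finset.univ.filter fun x =>
                    (if hx : x ∈ A then τ 0 else (g ⟨x, hx⟩ : κ)) = τ 0).card = nτ 0
                rw [hAfib, hAcard]
              · intro i'
                rw [← fibc_restrict _ A (τ 0) hAiff (τ i'.succ) (hτ'ne i') g
                  (fun x => by rw [dif_neg x.2])]
                exact hfibg i'
          · -- left inverse
            intro f hf
            have hfil : (Finset.univ.filter fun y => f y = τ 0) = A :=
              (Finset.mem_filter.1 hf).2
            have hAiff : ∀ x, x ∈ A ↔ f x = τ 0 := by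
              intro x
              rw [← hfil]
              simp only [Finset.mem_filter, Finset.mem_univ, true_and]
            funext x
            dsimp only
            by_cases hx : x ∈ A
            · rw [dif_pos hx, ((hAiff x).1 hx)]
            · rw [dif_neg hx]
          · -- right inverse
            intro g _
            funext x
            refine Subtype.ext ?_
            dsimp only
            rw [dif_neg x.2]
          · -- weights
            intro f hf
            have hfS := (Finset.mem_filter.1 hf).1
            have hfil : (Finset.univ.filter fun y => f y = τ 0) = A :=
              (Finset.mem_filter.1 hf).2
            have hAiff : ∀ x, x ∈ A ↔ f x = τ 0 := by
              intro x
              rw [← hfil]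
              simp only [Finset.mem_filter, Finset.mem_univ, true_and]
            obtain ⟨hsurjf, hfibf⟩ := (hS f).1 hfS
            rw [← Finset.mul_prod_erase Finset.univ
              (fun c => risingFac (1 - σ) (fibc f c - 1)) (Finset.mem_univ (τ 0))]
            congr 1
            · rw [hfibf 0]
            · rw [Finset.prod_subtype (Finset.univ.erase (τ 0))
                (p := fun c => c ≠ τ 0)
                (fun c => by simp [Finset.mem_erase])
                (fun c => risingFac (1 - σ) (fibc f c - 1))]
              refine Finset.prod_congr rfl fun c' _ => ?_
              refine congrArg (fun m => risingFac (1 - σ) (m - 1)) ?_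
              refine (fibc_restrict f A (τ 0) hAiff c'.1 c'.2 _ ?_).symm
              intro x
              rfl
        have hIH := ih {x : γ // x ∉ A} {c : κ // c ≠ τ 0} τ' hτ' (fun i => nτ i.succ)
          (fun i => hnτ i.succ) (by rw [hγ']; exact hsum') T hT
        have hssum : ssum (fun m => risingFac (1 - σ) (m - 1))
              (Fin (Fintype.card {x : γ // x ∉ A} - ∑ i : Fin p, nτ i.succ))
              (Fin (Fintype.card {c : κ // c ≠ τ 0} - p))
            = ssum (fun m => risingFac (1 - σ) (m - 1))
              (Fin (Fintype.card γ - ∑ i : Fin (p + 1), nτ i))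
              (Fin (Fintype.card κ - (p + 1))) :=
          ssum_congr _ (finCongr (by rw [hγ', hsum_succ]; omega))
            (finCongr (by rw [hκ']; omega))
        rw [hbij, ← Finset.mul_sum, hIH, hssum, hγ']
      rw [Finset.sum_congr rfl hinner, Finset.sum_const, Finset.card_powersetCard,
        Finset.card_univ, nsmul_eq_mul]
      -- final arithmetic
      have hm0sum : nτ 0 ≤ ∑ i : Fin (p + 1), nτ i :=
        Finset.single_le_sum (fun i _ => Nat.zero_le (nτ i)) (Finset.mem_univ 0)
      have hm0N : nτ 0 ≤ Fintype.card γ := le_trans hm0sum hsum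
      have hchoose : (Nat.factorial (Fintype.card γ) : ℝ)
          = (Nat.choose (Fintype.card γ) (nτ 0) : ℝ) * (Nat.factorial (nτ 0) : ℝ)
            * (Nat.factorial (Fintype.card γ - nτ 0) : ℝ) := by
        exact_mod_cast congrArg Nat.cast (Nat.choose_mul_factorial_mul_factorial hm0N).symm
      have hsub1 : (Fintype.card γ - nτ 0) - (∑ i : Fin p, nτ i.succ)
          = Fintype.card γ - ∑ i : Fin (p + 1), nτ i := by
        rw [hsum_succ]
        omega
      have hprodfac : (∏ i : Fin (p + 1), (Nat.factorial (nτ i) : ℝ))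
          = (Nat.factorial (nτ 0) : ℝ) * ∏ i : Fin p, (Nat.factorial (nτ i.succ) : ℝ) :=
        Fin.prod_univ_succ _
      have hprodrf : (∏ i : Fin (p + 1), risingFac (1 - σ) (nτ i - 1))
          = risingFac (1 - σ) (nτ 0 - 1) * ∏ i : Fin p, risingFac (1 - σ) (nτ i.succ - 1) :=
        Fin.prod_univ_succ _
      rw [hsub1, hprodfac, hprodrf, hchoose]
      have hf1 : (Nat.factorial (nτ 0) : ℝ) ≠ 0 := Nat.cast_ne_zero.2 (Nat.factorial_ne_zero _)
      have hf2 : (Nat.factorial (Fintype.card γ - nτ 0) : ℝ) ≠ 0 :=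
        Nat.cast_ne_zero.2 (Nat.factorial_ne_zero _)
      have hf3 : (Nat.factorial (Fintype.card γ - ∑ i : Fin (p + 1), nτ i) : ℝ) ≠ 0 :=
        Nat.cast_ne_zero.2 (Nat.factorial_ne_zero _)
      have hf4 : (∏ i : Fin p, (Nat.factorial (nτ i.succ) : ℝ)) ≠ 0 :=
        Finset.prod_ne_zero_iff.2 fun i _ => Nat.cast_ne_zero.2 (Nat.factorial_ne_zero _)
      field_simp

end AuxJBSD3

section AuxJBSD4

open Function

lemma fibc_eq_card {γ κ : Type} [Fintype γ] (f : γ → κ) (c : κ) (B : Finset γ)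
    (h : ∀ x, f x = c ↔ x ∈ B) : fibc f c = B.card := by
  rw [fibc]
  congr 1
  ext x
  simp only [Finset.mem_filter, Finset.mem_univ, true_and]
  exact h x

lemma existsUnique_block {j : ℕ} {α : Type} [Fintype α] (β : Fin j → Finset α)
    (hinj : Function.Injective β)
    (hpart : IsPartOn (Finset.univ : Finset α) (Finset.image β Finset.univ)) (x : α) :
    ∃! i, x ∈ β i := by
  obtain ⟨B, ⟨hBmem, hxB⟩, huniq⟩ := hpart.2.2 x (Finset.mem_univ x)
  obtain ⟨i₀, -, hBi⟩ := Finset.mem_image.1 hBmem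
  refine ⟨i₀, ?_, ?_⟩
  · show x ∈ β i₀
    rw [hBi]; exact hxB
  · intro i hi
    have hBeq : β i = B := huniq (β i) ⟨Finset.mem_image_of_mem β (Finset.mem_univ i), hi⟩
    exact hinj (hBeq.trans hBi.symm)

set_option maxHeartbeats 1600000 in
lemma partition_sum_eq_surj_sum (σ : ℝ) (j p : ℕ) (α : Type) [Fintype α]
    (τ : Fin p → Fin j) (nτ : Fin p → ℕ) (S : Finset (α → Fin j))
    (hS : ∀ f, f ∈ S ↔ (Function.Surjective f ∧ ∀ i, fibc f (τ i) = nτ i)) :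
    (∑ π' ∈ partsJOf (Finset.univ : Finset α) j,
      (bijCount j π' (fun β => ∀ i, (β (τ i)).card = nτ i) : ℝ) *
        ∏ C ∈ π', risingFac (1 - σ) (C.card - 1))
    = ∑ f ∈ S, ∏ c, risingFac (1 - σ) (fibc f c - 1) := by
  have hfibeq : ∀ (f : α → Fin j) (c : Fin j),
      (Finset.univ.filter fun x => f x = c).card = fibc f c := by
    intro f c
    rw [fibc]
    congr 1
    ext x
    simp only [Finset.mem_filter, Finset.mem_univ, true_and]
  -- Step A : expand bijCount
  have hwt : ∀ π' : Finset (Finset α),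
      (bijCount j π' (fun β => ∀ i, (β (τ i)).card = nτ i) : ℝ) *
        (∏ C ∈ π', risingFac (1 - σ) (C.card - 1))
      = ∑ β : Fin j → Finset α,
          if (Function.Injective β ∧ Finset.image β Finset.univ = π' ∧
              ∀ i, (β (τ i)).card = nτ i)
          then (∏ C ∈ π', risingFac (1 - σ) (C.card - 1)) else 0 := by
    intro π'
    rw [bijCount, Finset.card_filter, Nat.cast_sum, Finset.sum_mul]
    refine Finset.sum_congr rfl fun β _ => ?_
    split
    · rename_i hcond
      rw [Nat.cast_one, one_mul]
    · rename_i hcond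
      rw [Nat.cast_zero, zero_mul]
  rw [Finset.sum_congr rfl fun π' _ => hwt π', Finset.sum_comm]
  -- Step B : collapse the sum over π'
  have hswap : ∀ β : Fin j → Finset α,
      (∑ π' ∈ partsJOf (Finset.univ : Finset α) j,
        if (Function.Injective β ∧ Finset.image β Finset.univ = π' ∧
            ∀ i, (β (τ i)).card = nτ i)
        then (∏ C ∈ π', risingFac (1 - σ) (C.card - 1)) else 0)
      = if (Function.Injective β ∧
            Finset.image β Finset.univ ∈ partsJOf (Finset.univ : Finset α) j ∧
            ∀ i, (β (τ i)).card = nτ i)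
        then (∏ C ∈ Finset.image β Finset.univ, risingFac (1 - σ) (C.card - 1)) else 0 := by
    intro β
    have hstep : ∀ π' ∈ partsJOf (Finset.univ : Finset α) j,
        (if (Function.Injective β ∧ Finset.image β Finset.univ = π' ∧
            ∀ i, (β (τ i)).card = nτ i)
        then (∏ C ∈ π', risingFac (1 - σ) (C.card - 1)) else 0)
        = if π' = Finset.image β Finset.univ
          then (if (Function.Injective β ∧ ∀ i, (β (τ i)).card = nτ i)
            then (∏ C ∈ π', risingFac (1 - σ) (C.card - 1)) else 0)
          else 0 := by
      intro π' _
      by_cases h1 : π' = Finset.image β Finset.univ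
      · rw [if_pos h1]
        by_cases h2 : Function.Injective β ∧ ∀ i, (β (τ i)).card = nτ i
        · rw [if_pos ⟨h2.1, h1.symm, h2.2⟩, if_pos h2]
        · rw [if_neg fun hh => h2 ⟨hh.1, hh.2.2⟩, if_neg h2]
      · rw [if_neg fun hh => h1 hh.2.1.symm, if_neg h1]
    rw [Finset.sum_congr rfl hstep,
      Finset.sum_ite_eq' (partsJOf (Finset.univ : Finset α) j)
        (Finset.image β Finset.univ)
        (fun π' => if (Function.Injective β ∧ ∀ i, (β (τ i)).card = nτ i)
          then (∏ C ∈ π', risingFac (1 - σ) (C.card - 1)) else 0)]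
    by_cases hmem : Finset.image β Finset.univ ∈ partsJOf (Finset.univ : Finset α) j
    · rw [if_pos hmem]
      by_cases h2 : Function.Injective β ∧ ∀ i, (β (τ i)).card = nτ i
      · rw [if_pos h2, if_pos ⟨h2.1, hmem, h2.2⟩]
      · rw [if_neg h2, if_neg fun hh => h2 ⟨hh.1, hh.2.2⟩]
    · rw [if_neg hmem, if_neg fun hh => hmem hh.2.1]
  rw [Finset.sum_congr rfl fun β _ => hswap β, ← Finset.sum_filter]
  -- Step C : the bijection between labelled partitions and surjections
  refine (Finset.sum_bij'
    (i := fun (f : α → Fin j) _ =>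
      fun c => Finset.univ.filter fun x => f x = c)
    (j := fun (β : Fin j → Finset α) hβ =>
      fun x => Fintype.choose (fun i => x ∈ β i) (by
        simp only [Finset.mem_filter, Finset.mem_univ, true_and] at hβ
        obtain ⟨hinj, hmem, hQ⟩ := hβ
        have hpart : IsPartOn (Finset.univ : Finset α) (Finset.image β Finset.univ) := by
          have h := hmem
          simp only [partsJOf, Finset.mem_filter, Finset.mem_univ, true_and] at h
          exact h.1
        exact existsUnique_block β hinj hpart x))
    ?_ ?_ ?_ ?_ ?_).symm
  · -- i maps surjections into labelled partitions
    intro f hf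
    obtain ⟨hsurj, hfib⟩ := (hS f).1 hf
    simp only [Finset.mem_filter, Finset.mem_univ, true_and]
    have hinj : Function.Injective (fun c => Finset.univ.filter fun x => f x = c) := by
      intro c₁ c₂ hcc
      have hcc2 : (Finset.univ.filter fun x => f x = c₁)
          = (Finset.univ.filter fun x => f x = c₂) := hcc
      obtain ⟨x, hx⟩ := hsurj c₁
      have hx1 : x ∈ Finset.univ.filter fun y => f y = c₁ := by
        simp only [Finset.mem_filter, Finset.mem_univ, true_and]; exact hx
      rw [hcc2] at hx1
      simp only [Finset.mem_filter, Finset.mem_univ, true_and] at hx1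
      rw [← hx, hx1]
    refine ⟨hinj, ?_, ?_⟩
    · simp only [partsJOf, Finset.mem_filter, Finset.mem_univ, true_and]
      constructor
      · refine ⟨fun B _ => Finset.subset_univ B, ?_, ?_⟩
        · intro hem
          obtain ⟨c, _, hc⟩ := Finset.mem_image.1 hem
          obtain ⟨x, hx⟩ := hsurj c
          have hc' : (Finset.univ.filter fun y => f y = c) = ∅ := hc
          have hx2 : x ∈ (∅ : Finset α) := by
            rw [← hc']
            simp only [Finset.mem_filter, Finset.mem_univ, true_and]
            exact hx
          exact absurd hx2 (Finset.notMem_empty x)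
        · intro a _
          refine ⟨Finset.univ.filter fun x => f x = f a, ⟨?_, ?_⟩, ?_⟩
          · exact Finset.mem_image_of_mem _ (Finset.mem_univ (f a))
          · simp only [Finset.mem_filter, Finset.mem_univ, true_and]
          · rintro B ⟨hBmem, haB⟩
            obtain ⟨c, _, hc⟩ := Finset.mem_image.1 hBmem
            have hc' : (Finset.univ.filter fun y => f y = c) = B := hc
            rw [← hc'] at haB ⊢
            simp only [Finset.mem_filter, Finset.mem_univ, true_and] at haB
            rw [haB]
      · rw [Finset.card_image_of_injective _ hinj, Finset.card_univ, Fintype.card_fin]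
    · intro i
      rw [hfibeq]
      exact hfib i
  · -- j maps labelled partitions to surjections
    intro β hβ
    have hβ' := hβ
    simp only [Finset.mem_filter, Finset.mem_univ, true_and] at hβ'
    obtain ⟨hinj, hmem, hQ⟩ := hβ'
    have hpart : IsPartOn (Finset.univ : Finset α) (Finset.image β Finset.univ) := by
      have h := hmem
      simp only [partsJOf, Finset.mem_filter, Finset.mem_univ, true_and] at h
      exact h.1
    rw [hS]
    constructor
    · intro c
      have hβc : β c ∈ Finset.image β Finset.univ :=
        Finset.mem_image_of_mem β (Finset.mem_univ c)
      have hne : β c ≠ ∅ := fun he => hpart.2.1 (he ▸ hβc)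
      obtain ⟨x, hx⟩ := Finset.nonempty_iff_ne_empty.2 hne
      refine ⟨x, ?_⟩
      have hp' := existsUnique_block β hinj hpart x
      have hspec := Fintype.choose_spec (fun i => x ∈ β i) hp'
      show Fintype.choose (fun i => x ∈ β i) _ = c
      exact hp'.unique (Fintype.choose_spec (fun i => x ∈ β i) _) hx
    · intro i
      have hp' := fun x => existsUnique_block β hinj hpart x
      rw [fibc_eq_card _ (τ i) (β (τ i)) ?_]
      · exact hQ i
      · intro x
        constructor
        · intro hch
          have hch' : Fintype.choose (fun i' => x ∈ β i') (hp' x) = τ i := hch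
          have hspec := Fintype.choose_spec (fun i' => x ∈ β i') (hp' x)
          rw [hch'] at hspec
          exact hspec
        · intro hx
          exact (hp' x).unique (Fintype.choose_spec (fun i' => x ∈ β i') _) hx
  · -- left inverse
    intro f hf
    funext x
    have hp' : ∃! i : Fin j, x ∈ (fun c => Finset.univ.filter fun y => f y = c) i := by
      refine ⟨f x, ?_, ?_⟩
      · simp only [Finset.mem_filter, Finset.mem_univ, true_and]
      · intro i hi
        simp only [Finset.mem_filter, Finset.mem_univ, true_and] at hi
        exact hi.symm
    exact hp'.unique
      (Fintype.choose_spec (fun i => x ∈ (fun c => Finset.univ.filter fun y => f y = c) i) hp')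
      (by simp only [Finset.mem_filter, Finset.mem_univ, true_and])
  · -- right inverse
    intro β hβ
    have hβ' := hβ
    simp only [Finset.mem_filter, Finset.mem_univ, true_and] at hβ'
    obtain ⟨hinj, hmem, hQ⟩ := hβ'
    have hpart : IsPartOn (Finset.univ : Finset α) (Finset.image β Finset.univ) := by
      have h := hmem
      simp only [partsJOf, Finset.mem_filter, Finset.mem_univ, true_and] at h
      exact h.1
    have hp' := fun x => existsUnique_block β hinj hpart x
    funext c
    ext x
    simp only [Finset.mem_filter, Finset.mem_univ, true_and]
    constructor
    · intro hch
      have hch' : Fintype.choose (fun i' => x ∈ β i') (hp' x) = c := hch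
      have hspec := Fintype.choose_spec (fun i' => x ∈ β i') (hp' x)
      rw [hch'] at hspec
      exact hspec
    · intro hx
      exact (hp' x).unique (Fintype.choose_spec (fun i' => x ∈ β i') _) hx
  · -- weights agree
    intro f hf
    obtain ⟨hsurj, hfib⟩ := (hS f).1 hf
    have hinj : Function.Injective (fun c => Finset.univ.filter fun x => f x = c) := by
      intro c₁ c₂ hcc
      have hcc2 : (Finset.univ.filter fun x => f x = c₁)
          = (Finset.univ.filter fun x => f x = c₂) := hcc
      obtain ⟨x, hx⟩ := hsurj c₁
      have hx1 : x ∈ Finset.univ.filter fun y => f y = c₁ := by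
        simp only [Finset.mem_filter, Finset.mem_univ, true_and]; exact hx
      rw [hcc2] at hx1
      simp only [Finset.mem_filter, Finset.mem_univ, true_and] at hx1
      rw [← hx, hx1]
    rw [Finset.prod_image (fun c₁ _ c₂ _ h => hinj h)]
    refine Finset.prod_congr rfl fun c _ => ?_
    rw [hfibeq]

end AuxJBSD4

/-- joint distribution of the number of blocks and a subset of the
block sizes under a Gibbs-type partition. -/
theorem joint_blocks_sizes_distribution
    (n j p : ℕ) (hn : 1 ≤ n) (hp1 : 1 ≤ p) (hpj : p ≤ j) (hjn : j ≤ n)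
    (σ : ℝ) (hσ1 : σ < 1) (hσ0 : σ ≠ 0)
    (V : ℕ → ℕ → ℝ) (hV11 : V 1 1 = 1)
    (hVnn : ∀ N k, 1 ≤ k → k ≤ N → 0 ≤ V N k)
    (hVrec : ∀ N k, 1 ≤ k → k ≤ N →
      V N k = V (N + 1) (k + 1) + ((N : ℝ) - (k : ℝ) * σ) * V (N + 1) k)
    (τ : Fin p → Fin j) (hτ : StrictMono τ)
    (nτ : Fin p → ℕ) (hnτ : ∀ i, 1 ≤ nτ i) (hnτsum : (∑ i, nτ i) ≤ n - (j - p)) :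
    (1 / (Nat.factorial j : ℝ)) *
        ∑ π' ∈ partsJOf (Finset.univ : Finset (Fin n)) j,
          (bijCount j π' (fun β => ∀ i, (β (τ i)).card = nτ i) : ℝ) *
            gibbsW σ (V n) π' =
      V n j * ((Nat.factorial (j - p) : ℝ) / (Nat.factorial j : ℝ)) *
        ((Nat.factorial n : ℝ) /
          ((∏ i, (Nat.factorial (nτ i) : ℝ)) * (Nat.factorial (n - ∑ i, nτ i) : ℝ))) *
        (∏ i, risingFac (1 - σ) (nτ i - 1)) *
        cgfc (n - ∑ i, nτ i) (j - p) σ / σ ^ (j - p) := by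
  have hgib : ∀ π' ∈ partsJOf (Finset.univ : Finset (Fin n)) j,
      (bijCount j π' (fun β => ∀ i, (β (τ i)).card = nτ i) : ℝ) * gibbsW σ (V n) π'
      = V n j * ((bijCount j π' (fun β => ∀ i, (β (τ i)).card = nτ i) : ℝ) *
          ∏ C ∈ π', risingFac (1 - σ) (C.card - 1)) := by
    intro π' hπ'
    have hcard : π'.card = j := by
      simp only [partsJOf, Finset.mem_filter, Finset.mem_univ, true_and] at hπ'
      exact hπ'.2
    rw [gibbsW, hcard]
    ring
  rw [Finset.sum_congr rfl hgib, ← Finset.mul_sum]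
  set S : Finset (Fin n → Fin j) := Finset.univ.filter
    (fun f => Function.Surjective f ∧ ∀ i, fibc f (τ i) = nτ i) with hSdef
  have hS : ∀ f, f ∈ S ↔ (Function.Surjective f ∧ ∀ i, fibc f (τ i) = nτ i) := by
    intro f
    rw [hSdef, Finset.mem_filter]
    simp only [Finset.mem_univ, true_and]
  rw [partition_sum_eq_surj_sum σ j p (Fin n) τ nτ S hS]
  have hn' : (∑ i, nτ i) ≤ Fintype.card (Fin n) := by
    rw [Fintype.card_fin]
    exact le_trans hnτsum (Nat.sub_le _ _)
  rw [master_lemma σ p (Fin n) (Fin j) τ hτ.injective nτ hnτ hn' S hS]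
  have hssum2 : ssum (fun m => risingFac (1 - σ) (m - 1))
      (Fin (Fintype.card (Fin n) - ∑ i, nτ i)) (Fin (Fintype.card (Fin j) - p))
      = (Nat.factorial (j - p) : ℝ) * cgfc (n - ∑ i, nτ i) (j - p) σ / σ ^ (j - p) := by
    rw [ssum_congr _ (finCongr (by rw [Fintype.card_fin]))
      (finCongr (by rw [Fintype.card_fin]))]
    exact ssum_wt_eq_cgfc σ hσ0 _ _
  rw [hssum2]
  simp only [Fintype.card_fin]
  have hjf : (Nat.factorial j : ℝ) ≠ 0 := Nat.cast_ne_zero.2 (Nat.factorial_ne_zero _)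
  have hσk : σ ^ (j - p) ≠ 0 := pow_ne_zero _ hσ0
  have hprod : (∏ i, (Nat.factorial (nτ i) : ℝ)) ≠ 0 :=
    Finset.prod_ne_zero_iff.2 fun i _ => Nat.cast_ne_zero.2 (Nat.factorial_ne_zero _)
  have hnm : (Nat.factorial (n - ∑ i, nτ i) : ℝ) ≠ 0 :=
    Nat.cast_ne_zero.2 (Nat.factorial_ne_zero _)
  field_simp
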